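/- (Instantaneous lenient regret bound — deterministic core of Theorem 2.) Let M be a symmetric positive definite real n×n matrix, τ ∈ ℝ, w_t, w* ∈ Δ_n, β ≥ 0, and let X be a finite nonempty set with vectors f_x, u_x, σ_x ∈ ℝ^n for each x ∈ X satisfying componentwise f_x ≤ u_x ≤ f_x + 2βσ_x and σ_x ≥ 0. Assume there exists x̂ ∈ X with ⟨w_t, f_{x̂}⟩ ≥ τ. For x with ⟨w_t, u_x⟩ ≥ τ define κ̂(x) := sup_{w ∈ Δ_n, w ≠ w_t} (τ − ⟨w, u_x⟩)/‖w − w_t‖_M, and κ̂(x) := +∞ otherwise, and let x_t ∈ argmin_{x ∈ X} κ̂(x). Let B' := max_{x ∈ X} ‖f_x‖_{M⁻¹} and ε := ‖w* − w_t‖_M. Then τ − ⟨w*, f_{x_t}⟩ ≤ εB' + 2β⟨w*, σ_{x_t}⟩. -/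

import Mathlib

open Matrix

/-- The MMD (maximum mean discrepancy) "norm" `‖w‖_M = √(wᵀ M w)` associated with a
kernel matrix `M`. -/
noncomputable def mmd {n : ℕ} (M : Matrix (Fin n) (Fin n) ℝ) (w : Fin n → ℝ) : ℝ :=
  Real.sqrt (w ⬝ᵥ M.mulVec w)

/-- The supremum (in the extended reals) appearing in the definition of the estimated
fragility: `sup_{w ∈ Δ_n, w ≠ w_t} (τ - ⟨w, v⟩)/‖w - w_t‖_M`. -/
noncomputable def fragSup {n : ℕ} (M : Matrix (Fin n) (Fin n) ℝ) (τ : ℝ)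
    (wt v : Fin n → ℝ) : EReal :=
  ⨆ w : {w : Fin n → ℝ // w ∈ stdSimplex ℝ (Fin n) ∧ w ≠ wt},
    (((τ - (w : Fin n → ℝ) ⬝ᵥ v) / mmd M ((w : Fin n → ℝ) - wt) : ℝ) : EReal)

/-- The estimated fragility `κ̂_τ(x)` of an action whose upper-confidence-bound vector is
`u`: `sup_{w ∈ Δ_n, w ≠ w_t} (τ - ⟨w, u⟩)/‖w - w_t‖_M` if `⟨w_t, u⟩ ≥ τ`, and `+∞`
otherwise. -/
noncomputable def estFragility {n : ℕ} (M : Matrix (Fin n) (Fin n) ℝ) (τ : ℝ)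
    (wt u : Fin n → ℝ) : EReal :=
  if τ ≤ wt ⬝ᵥ u then fragSup M τ wt u else ⊤

section Aux

variable {n : ℕ} {M : Matrix (Fin n) (Fin n) ℝ}

lemma dot_mono {w a b : Fin n → ℝ} (hw : ∀ i, 0 ≤ w i) (hab : ∀ i, a i ≤ b i) :
    w ⬝ᵥ a ≤ w ⬝ᵥ b := by
  apply Finset.sum_le_sum
  intro i _
  exact mul_le_mul_of_nonneg_left (hab i) (hw i)

lemma mmd_nonneg (v : Fin n → ℝ) : 0 ≤ mmd M v := Real.sqrt_nonneg _

lemma mmd_pos (hM : M.PosDef) {v : Fin n → ℝ} (hv : v ≠ 0) : 0 < mmd M v := by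
  have := hM.dotProduct_mulVec_pos hv
  simp only [star_trivial] at this
  exact Real.sqrt_pos.mpr this

lemma mmd_neg (v : Fin n → ℝ) : mmd M (-v) = mmd M v := by
  unfold mmd
  rw [mulVec_neg, neg_dotProduct, dotProduct_neg, neg_neg]

lemma mmd_zero : mmd M (0 : Fin n → ℝ) = 0 := by
  unfold mmd
  simp

/-- Cauchy–Schwarz for the `M`-inner product: `⟨a, b⟩ ≤ ‖a‖_M ‖b‖_{M⁻¹}`. -/
lemma dot_le_mmd_mul_sqrt (hM : M.PosDef) (a b : Fin n → ℝ) :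
    a ⬝ᵥ b ≤ mmd M a * Real.sqrt (b ⬝ᵥ M⁻¹.mulVec b) := by
  have hN : (M⁻¹).PosDef := hM.inv
  set N := M⁻¹ with hNdef
  have hMsymm : Mᵀ = M := by
    have := hM.isHermitian
    rwa [IsHermitian, conjTranspose_eq_transpose_of_trivial] at this
  have hMN : ∀ x : Fin n → ℝ, M *ᵥ (N *ᵥ x) = x := by
    intro x
    rw [mulVec_mulVec, hNdef, Matrix.mul_nonsing_inv M hM.det_pos.ne'.isUnit, one_mulVec]
  set A := a ⬝ᵥ M.mulVec a with hA
  set B := b ⬝ᵥ N.mulVec b with hB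
  set c := a ⬝ᵥ b with hc
  have hA0 : 0 ≤ A := by simpa [star_trivial] using hM.posSemidef.dotProduct_mulVec_nonneg a
  have hB0 : 0 ≤ B := by simpa [star_trivial] using hN.posSemidef.dotProduct_mulVec_nonneg b
  have hvb : (N *ᵥ b) ⬝ᵥ b = B := by
    rw [dotProduct_comm]
  have hvMa : (N *ᵥ b) ⬝ᵥ (M *ᵥ a) = c := by
    rw [dotProduct_mulVec, ← mulVec_transpose, hMsymm, hMN, dotProduct_comm]
  have key : ∀ t : ℝ, 0 ≤ A - 2 * t * c + t ^ 2 * B := by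
    intro t
    have h0 := hM.posSemidef.dotProduct_mulVec_nonneg (a - t • (N *ᵥ b))
    simp only [star_trivial] at h0
    have hexp : (a - t • (N *ᵥ b)) ⬝ᵥ M *ᵥ (a - t • (N *ᵥ b))
        = A - 2 * t * c + t ^ 2 * B := by
      rw [mulVec_sub, mulVec_smul, hMN, sub_dotProduct, dotProduct_sub, dotProduct_sub,
        smul_dotProduct, smul_dotProduct, dotProduct_smul, dotProduct_smul, hvMa, hvb]
      simp only [smul_eq_mul, ← hA, ← hc]
      ring
    rw [hexp] at h0
    exact h0
  have hc2 : c ^ 2 ≤ A * B := by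
    rcases eq_or_lt_of_le hB0 with hB0' | hB0'
    · -- B = 0 forces b = 0 hence c = 0
      have hb0 : b = 0 := by
        by_contra hb
        have := hN.dotProduct_mulVec_pos hb
        simp only [star_trivial] at this
        rw [← hB] at this
        exact absurd hB0'.symm this.ne'
      simp [hc, hb0, dotProduct_zero]
      positivity
    · have h := key (c / B)
      have heq : A - 2 * (c / B) * c + (c / B) ^ 2 * B = A - c ^ 2 / B := by
        field_simp
        ring
      rw [heq] at h
      have h2 : c ^ 2 / B ≤ A := by linarith
      calc c ^ 2 = c ^ 2 / B * B := by field_simp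
        _ ≤ A * B := mul_le_mul_of_nonneg_right h2 hB0'.le
  calc c ≤ |c| := le_abs_self c
    _ = Real.sqrt (c ^ 2) := (Real.sqrt_sq_eq_abs c).symm
    _ ≤ Real.sqrt (A * B) := Real.sqrt_le_sqrt hc2
    _ = Real.sqrt A * Real.sqrt B := Real.sqrt_mul hA0 _

end Aux

/-- **instantaneous lenient regret bound — deterministic core of Theorem 2.**
With `f_x ≤ u_x ≤ f_x + 2βσ_x` componentwise, `σ_x ≥ 0`, some action feasible under the
reference distribution `w_t`, `x_t` a minimizer of the estimated fragility,
`B' = max_x ‖f_x‖_{M⁻¹}` and `ε = ‖w* - w_t‖_M`, we have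
`τ - ⟨w*, f_{x_t}⟩ ≤ εB' + 2β⟨w*, σ_{x_t}⟩`. -/
theorem instantaneous_lenient_regret_bound {n : ℕ} (M : Matrix (Fin n) (Fin n) ℝ)
    (hM : M.PosDef) (τ : ℝ) (wt wstar : Fin n → ℝ)
    (hwt : wt ∈ stdSimplex ℝ (Fin n)) (hwstar : wstar ∈ stdSimplex ℝ (Fin n))
    (β : ℝ) (hβ : 0 ≤ β)
    {X : Type*} [Fintype X] [Nonempty X]
    (f u σ : X → Fin n → ℝ)
    (hfu : ∀ x i, f x i ≤ u x i)
    (huf : ∀ x i, u x i ≤ f x i + 2 * β * σ x i)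
    (hσ : ∀ x i, 0 ≤ σ x i)
    (hfeas : ∃ xhat : X, τ ≤ wt ⬝ᵥ f xhat)
    (xt : X) (hxt : ∀ x : X, estFragility M τ wt (u xt) ≤ estFragility M τ wt (u x)) :
    τ - wstar ⬝ᵥ f xt
      ≤ mmd M (wstar - wt) * (⨆ x : X, Real.sqrt (f x ⬝ᵥ M⁻¹.mulVec (f x)))
        + 2 * β * (wstar ⬝ᵥ σ xt) := by
  obtain ⟨xhat, hxhat⟩ := hfeas
  set B' : ℝ := ⨆ x : X, Real.sqrt (f x ⬝ᵥ M⁻¹.mulVec (f x)) with hB'def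
  set ε : ℝ := mmd M (wstar - wt) with hεdef
  have hbdd : BddAbove (Set.range fun x : X => Real.sqrt (f x ⬝ᵥ M⁻¹.mulVec (f x))) :=
    Set.Finite.bddAbove (Set.finite_range _)
  have hB'x : ∀ x : X, Real.sqrt (f x ⬝ᵥ M⁻¹.mulVec (f x)) ≤ B' := fun x => le_ciSup hbdd x
  have hB'0 : 0 ≤ B' := le_trans (Real.sqrt_nonneg _) (hB'x xhat)
  -- feasibility with upper bounds
  have hxhatu : τ ≤ wt ⬝ᵥ u xhat := hxhat.trans (dot_mono (fun i => hwt.1 i) (hfu xhat))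
  -- frag sup of xhat is at most B'
  have hfragxhat : fragSup M τ wt (u xhat) ≤ (B' : EReal) := by
    apply iSup_le
    rintro ⟨w, hw, hwne⟩
    rw [EReal.coe_le_coe_iff]
    have hpos : 0 < mmd M (w - wt) := mmd_pos hM (sub_ne_zero.mpr hwne)
    rw [div_le_iff₀ hpos]
    have h1 : τ - w ⬝ᵥ u xhat ≤ (wt - w) ⬝ᵥ f xhat := by
      have := dot_mono (fun i => hw.1 i) (hfu xhat)
      rw [sub_dotProduct]
      linarith
    have h2 : (wt - w) ⬝ᵥ f xhat ≤ mmd M (wt - w) * Real.sqrt (f xhat ⬝ᵥ M⁻¹.mulVec (f xhat)) :=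
      dot_le_mmd_mul_sqrt hM _ _
    have h3 : mmd M (wt - w) = mmd M (w - wt) := by
      rw [show wt - w = -(w - wt) by ring, mmd_neg]
    calc τ - w ⬝ᵥ u xhat ≤ mmd M (w - wt) * Real.sqrt (f xhat ⬝ᵥ M⁻¹.mulVec (f xhat)) := by
          rw [← h3]; exact h1.trans h2
      _ ≤ mmd M (w - wt) * B' := by
          exact mul_le_mul_of_nonneg_left (hB'x xhat) hpos.le
      _ = B' * mmd M (w - wt) := mul_comm _ _
  have hestxt : estFragility M τ wt (u xt) ≤ (B' : EReal) := by
    calc estFragility M τ wt (u xt) ≤ estFragility M τ wt (u xhat) := hxt xhat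
      _ = fragSup M τ wt (u xhat) := if_pos hxhatu
      _ ≤ (B' : EReal) := hfragxhat
  have hτut : τ ≤ wt ⬝ᵥ u xt := by
    by_contra h
    rw [estFragility, if_neg h] at hestxt
    exact (EReal.coe_lt_top B').ne (top_le_iff.mp hestxt)
  have hfragxt : fragSup M τ wt (u xt) ≤ (B' : EReal) := by
    rwa [estFragility, if_pos hτut] at hestxt
  -- main inequality against u
  have hmain : τ - wstar ⬝ᵥ u xt ≤ ε * B' := by
    by_cases hws : wstar = wt
    · have hε0 : ε = 0 := by rw [hεdef, hws, sub_self, mmd_zero]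
      rw [hε0, zero_mul, hws]
      linarith
    · have hεpos : 0 < ε := mmd_pos hM (sub_ne_zero.mpr hws)
      have hle : (((τ - wstar ⬝ᵥ u xt) / mmd M (wstar - wt) : ℝ) : EReal)
          ≤ fragSup M τ wt (u xt) :=
        le_iSup (fun w : {w : Fin n → ℝ // w ∈ stdSimplex ℝ (Fin n) ∧ w ≠ wt} =>
          (((τ - (w : Fin n → ℝ) ⬝ᵥ u xt) / mmd M ((w : Fin n → ℝ) - wt) : ℝ) : EReal))
          ⟨wstar, hwstar, hws⟩
      have := hle.trans hfragxt
      rw [EReal.coe_le_coe_iff] at this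
      rw [div_le_iff₀ hεpos] at this
      linarith [this, mul_comm B' ε]
  -- confidence width
  have hwidth : wstar ⬝ᵥ u xt ≤ wstar ⬝ᵥ f xt + 2 * β * (wstar ⬝ᵥ σ xt) := by
    have h1 : wstar ⬝ᵥ u xt ≤ wstar ⬝ᵥ (f xt + (2 * β) • σ xt) := by
      apply dot_mono (fun i => hwstar.1 i)
      intro i
      simpa [smul_eq_mul] using huf xt i
    rwa [dotProduct_add, dotProduct_smul, smul_eq_mul] at h1
  linarith
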